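/- Let m and t0 be positive real numbers, set μ := min{m, 2}, and for t ≥ t0 define γ(m,t0,t) := ∫_{t0}^t (t0/s)^m ds. Then for every t ≥ t0 one has (t0/t)² · γ(m,t0,t)² ≤ t0² · (t0/t)^μ. -/
import Mathlib

open Real Set Filter MeasureTheory intervalIntegral

theorem gamma_estimate (m t0 : ℝ) (hm : 0 < m) (ht0 : 0 < t0) :
    ∀ t ≥ t0,
      (t0 / t) ^ 2 * (∫ s in t0..t, (t0 / s) ^ m) ^ 2 ≤
        t0 ^ 2 * (t0 / t) ^ (min m 2) := by
  intro t ht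
  have htpos : 0 < t := lt_of_lt_of_le ht0 ht
  set μ := min m 2 with hμdef
  have hμpos : 0 < μ := lt_min hm two_pos
  have hμ2 : μ ≤ 2 := min_le_right _ _
  have hμm : μ ≤ m := min_le_left _ _
  set c := μ / 2 with hcdef
  have hcpos : 0 < c := by positivity
  have hc1 : c ≤ 1 := by rw [hcdef]; linarith
  have hμcc : μ = c + c := by rw [hcdef]; ring
  have hspos : ∀ s ∈ Icc t0 t, 0 < s := fun s hs => lt_of_lt_of_le ht0 hs.1
  -- continuity / integrability of the power functions
  have hcont : ∀ p : ℝ, ContinuousOn (fun s : ℝ => (t0 / s) ^ p) (Icc t0 t) := by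
    intro p
    apply ContinuousOn.rpow_const
    · exact continuousOn_const.div continuousOn_id fun s hs => ne_of_gt (hspos s hs)
    · intro s hs
      exact Or.inl (ne_of_gt (div_pos ht0 (hspos s hs)))
  have hint : ∀ p : ℝ, IntervalIntegrable (fun s : ℝ => (t0 / s) ^ p) volume t0 t := by
    intro p
    apply ContinuousOn.intervalIntegrable
    rw [uIcc_of_le ht]
    exact hcont p
  -- Step 1: compare exponents
  have h1 : (∫ s in t0..t, (t0 / s) ^ m) ≤ ∫ s in t0..t, (t0 / s) ^ μ := by
    apply integral_mono_on ht (hint m) (hint μ)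
    intro s hs
    exact Real.rpow_le_rpow_of_exponent_ge (div_pos ht0 (hspos s hs))
      (div_le_one_of_le₀ hs.1 (hspos s hs).le) hμm
  -- Step 2: FTC comparison
  set F : ℝ → ℝ := fun s => t0 ^ c * (s ^ (-c) * (s - t0)) with hFdef
  set f' : ℝ → ℝ := fun s => t0 ^ c * (-c * s ^ (-c - 1) * (s - t0) + s ^ (-c) * 1) with hf'def
  have hF : ∀ s ∈ uIcc t0 t, HasDerivAt F (f' s) s := by
    intro s hs
    rw [uIcc_of_le ht] at hs
    have hs0 : s ≠ 0 := ne_of_gt (hspos s hs)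
    have hd1 : HasDerivAt (fun x : ℝ => x ^ (-c)) (-c * s ^ (-c - 1)) s :=
      Real.hasDerivAt_rpow_const (Or.inl hs0)
    have hd2 : HasDerivAt (fun x : ℝ => x - t0) 1 s := (hasDerivAt_id s).sub_const t0
    exact (hd1.mul hd2).const_mul _
  have hcontf' : ContinuousOn f' (Icc t0 t) := by
    have hc1' : ContinuousOn (fun s : ℝ => s ^ (-c - 1)) (Icc t0 t) :=
      ContinuousOn.rpow_const continuousOn_id fun s hs => Or.inl (ne_of_gt (hspos s hs))
    have hc2' : ContinuousOn (fun s : ℝ => s ^ (-c)) (Icc t0 t) :=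
      ContinuousOn.rpow_const continuousOn_id fun s hs => Or.inl (ne_of_gt (hspos s hs))
    exact continuousOn_const.mul (((continuousOn_const.mul hc1').mul
      (continuousOn_id.sub continuousOn_const)).add (hc2'.mul continuousOn_const))
  have hintf' : IntervalIntegrable f' volume t0 t := by
    apply ContinuousOn.intervalIntegrable
    rw [uIcc_of_le ht]
    exact hcontf'
  have hFTC : (∫ s in t0..t, f' s) = F t - F t0 := integral_eq_sub_of_hasDerivAt hF hintf'
  -- pointwise comparison with f'
  have hpt : ∀ s ∈ Icc t0 t, (t0 / s) ^ μ ≤ f' s := by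
    intro s hs
    have hs0 : (0:ℝ) < s := hspos s hs
    have hy : 0 < t0 / s := div_pos ht0 hs0
    -- Bernoulli / weighted AM-GM
    have hbern : (t0 / s) ^ c ≤ (1 - c) + c * (t0 / s) := by
      have := Real.geom_mean_le_arith_mean2_weighted (by linarith : (0:ℝ) ≤ 1 - c)
        hcpos.le zero_le_one hy.le (by ring)
      simpa using this
    have hmul : (t0 / s) ^ μ ≤ (t0 / s) ^ c * ((1 - c) + c * (t0 / s)) := by
      rw [hμcc, Real.rpow_add hy]
      exact mul_le_mul_of_nonneg_left hbern (Real.rpow_nonneg hy.le c)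
    have heq : (t0 / s) ^ c * ((1 - c) + c * (t0 / s)) = f' s := by
      have hdiv : (t0 / s) ^ c = t0 ^ c * s ^ (-c) := by
        rw [Real.div_rpow ht0.le hs0.le, Real.rpow_neg hs0.le, div_eq_mul_inv]
      have hsc : s ^ (-c - 1) = s ^ (-c) / s := by
        rw [show -c - 1 = -c - 1 from rfl, Real.rpow_sub hs0, Real.rpow_one]
      rw [hdiv, hf'def]
      simp only [hsc]
      field_simp
      ring
    rw [heq] at hmul
    exact hmul
  have h2 : (∫ s in t0..t, (t0 / s) ^ μ) ≤ F t - F t0 := by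
    rw [← hFTC]
    exact integral_mono_on ht (hint μ) hintf' hpt
  -- evaluate F
  have hFt0 : F t0 = 0 := by simp [hFdef]
  have hFt : F t = (t0 / t) ^ c * (t - t0) := by
    rw [hFdef]
    have : (t0 / t) ^ c = t0 ^ c * t ^ (-c) := by
      rw [Real.div_rpow ht0.le htpos.le, Real.rpow_neg htpos.le, div_eq_mul_inv]
    rw [this]; ring
  -- the main bound on γ
  have hA : 0 < t0 / t := div_pos ht0 htpos
  have hγle : (∫ s in t0..t, (t0 / s) ^ m) ≤ (t0 / t) ^ c * t := by
    calc (∫ s in t0..t, (t0 / s) ^ m) ≤ ∫ s in t0..t, (t0 / s) ^ μ := h1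
      _ ≤ F t - F t0 := h2
      _ = (t0 / t) ^ c * (t - t0) := by rw [hFt, hFt0]; ring
      _ ≤ (t0 / t) ^ c * t := by
          apply mul_le_mul_of_nonneg_left _ (Real.rpow_nonneg hA.le c)
          linarith
  have hγ0 : 0 ≤ ∫ s in t0..t, (t0 / s) ^ m := by
    apply intervalIntegral.integral_nonneg ht
    intro s hs
    exact Real.rpow_nonneg (div_nonneg ht0.le (hspos s hs).le) m
  have hsq : (∫ s in t0..t, (t0 / s) ^ m) ^ 2 ≤ ((t0 / t) ^ c * t) ^ 2 :=
    pow_le_pow_left₀ hγ0 hγle 2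
  calc (t0 / t) ^ 2 * (∫ s in t0..t, (t0 / s) ^ m) ^ 2
      ≤ (t0 / t) ^ 2 * ((t0 / t) ^ c * t) ^ 2 :=
        mul_le_mul_of_nonneg_left hsq (by positivity)
    _ = (t0 / t * t) ^ 2 * ((t0 / t) ^ c * (t0 / t) ^ c) := by ring
    _ = t0 ^ 2 * (t0 / t) ^ μ := by
        rw [div_mul_cancel₀ t0 (ne_of_gt htpos), ← Real.rpow_add hA, ← hμcc]
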